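/- Let S and C be real n×n matrices with |c_{ij}| ≤ s_{ij} for all i,j and 0 ≤ γ ≤ 1. Then the 2n×2n block matrix M_{−γ} with (i,j) block [[ (s_{ij}−γc_{ij})/2, (s_{ij}+γc_{ij})/2 ], [ (s_{ij}+γc_{ij})/2, (s_{ij}−γc_{ij})/2 ]] is nonnegative and its eigenvalue multiset is σ(S) ∪ (−γ)·σ(C). -/

import Mathlib

open Matrix Polynomial

variable {m : Type*} [Fintype m] [DecidableEq m]

lemma my_eval_charpoly {R : Type*} [CommRing R] (A : Matrix m m R) (x : R) :
    A.charpoly.eval x = (Matrix.scalar m x - A).det := by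
  rw [Matrix.charpoly, ← coe_evalRingHom, RingHom.map_det]
  congr 1
  ext i j
  by_cases hij : i = j <;>
    simp [hij, charmatrix_apply, Matrix.scalar_apply, Matrix.diagonal_apply, Matrix.sub_apply]

lemma my_det_fromBlocks_comm {R : Type*} [CommRing R] (P Q : Matrix m m R) :
    (fromBlocks P Q Q P).det = (P + Q).det * (P - Q).det := by
  have key : fromBlocks (1 : Matrix m m R) 0 1 1 * fromBlocks P Q Q P *
      fromBlocks 1 0 (-1) 1 = fromBlocks (P - Q) Q 0 (Q + P) := by
    rw [fromBlocks_multiply, fromBlocks_multiply]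
    simp
    constructor <;> abel
  have h1 : (fromBlocks (1 : Matrix m m R) (0 : Matrix m m R) 1 1).det = 1 := by
    rw [det_fromBlocks_zero₁₂]; simp
  have h2 : (fromBlocks (1 : Matrix m m R) (0 : Matrix m m R) (-1) 1).det = 1 := by
    rw [det_fromBlocks_zero₁₂]; simp
  have := congrArg Matrix.det key
  rw [det_mul, det_mul, h1, h2, det_fromBlocks_zero₂₁] at this
  rw [one_mul, mul_one] at this
  rw [this, add_comm Q P, mul_comm]

lemma my_charpoly_fromBlocks_comm {R : Type*} [CommRing R] (A B : Matrix m m R) :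
    (fromBlocks A B B A).charpoly = (A + B).charpoly * (A - B).charpoly := by
  have e1 : charmatrix A + -(B.map (C : R →+* R[X])) = charmatrix (A + B) := by
    ext i j
    by_cases hij : i = j <;>
      simp [hij, charmatrix_apply, Matrix.diagonal_apply, Matrix.add_apply, Matrix.neg_apply,
        Matrix.map_apply, Matrix.sub_apply] <;> ring
  have e2 : charmatrix A - -(B.map (C : R →+* R[X])) = charmatrix (A - B) := by
    ext i j
    by_cases hij : i = j <;>
      simp [hij, charmatrix_apply, Matrix.diagonal_apply, Matrix.sub_apply, Matrix.neg_apply,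
        Matrix.map_apply] <;> ring
  rw [Matrix.charpoly, charmatrix_fromBlocks, my_det_fromBlocks_comm, e1, e2,
    Matrix.charpoly, Matrix.charpoly]

lemma my_roots_charpoly_smul (a : ℂ) (A : Matrix m m ℂ) :
    ((a • A).charpoly).roots = A.charpoly.roots.map (fun z => a * z) := by
  have hmon := A.charpoly_monic
  have hsp : A.charpoly.Splits := IsAlgClosed.splits _
  have hprod : A.charpoly = (A.charpoly.roots.map fun μ => X - C μ).prod :=
    hsp.eq_prod_roots_of_monic hmon
  have hcard : A.charpoly.roots.card = Fintype.card m := by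
    rw [splits_iff_card_roots.mp hsp, Matrix.charpoly_natDegree_eq_dim]
  have key : (a • A).charpoly = (A.charpoly.roots.map fun μ => X - C (a * μ)).prod := by
    by_cases ha : a = 0
    · subst ha
      simp only [zero_smul, zero_mul]
      have hz : (0 : Matrix m m ℂ).charpoly = X ^ Fintype.card m := by
        have hc : charmatrix (0 : Matrix m m ℂ) = diagonal (fun _ => (X : ℂ[X])) := by
          ext i j
          by_cases hij : i = j <;> simp [hij, charmatrix_apply, Matrix.diagonal_apply]
        rw [Matrix.charpoly, hc, det_diagonal, Finset.prod_const, Finset.card_univ]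
      rw [hz]
      have : (A.charpoly.roots.map fun _ : ℂ => X - C (0 : ℂ)).prod
          = X ^ A.charpoly.roots.card := by
        simp [Multiset.map_const', Multiset.prod_replicate]
      simp only [this, hcard]
    · apply Polynomial.funext
      intro x
      rw [my_eval_charpoly, eval_multiset_prod]
      have hsc : a • Matrix.scalar m (x / a) = Matrix.scalar m x := by
        ext i j
        by_cases hij : i = j <;>
          simp [hij, Matrix.scalar_apply, Matrix.diagonal_apply, Matrix.smul_apply]
        field_simp
      have hsplit : Matrix.scalar m x - a • A = a • (Matrix.scalar m (x / a) - A) := by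
        rw [smul_sub, hsc]
      rw [hsplit, det_smul, ← my_eval_charpoly]
      have heval : A.charpoly.eval (x / a)
          = (A.charpoly.roots.map fun μ => x / a - μ).prod := by
        conv_lhs => rw [hprod]
        rw [eval_multiset_prod, Multiset.map_map]
        simp [Function.comp]
      rw [heval, ← hcard, ← Multiset.prod_replicate,
        ← Multiset.map_const' A.charpoly.roots a, ← Multiset.prod_map_mul]
      rw [Multiset.map_map]
      congr 1
      apply Multiset.map_congr rfl
      intro μ _
      simp only [Function.comp_apply, eval_sub, eval_X, eval_C]
      field_simp
  rw [key]
  have hmm : (A.charpoly.roots.map fun μ => X - C (a * μ))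
      = ((A.charpoly.roots.map fun z => a * z).map fun b => X - C b) := by
    rw [Multiset.map_map]
    simp [Function.comp_def]
  rw [hmm, roots_multiset_prod_X_sub_C]

/-- the block matrix M_{−γ} is nonnegative with eigenvalue multiset
σ(S) ∪ (−γ)·σ(C). -/
theorem stmt6 (n : ℕ) (s c : Fin n → Fin n → ℝ)
    (h : ∀ i j, |c i j| ≤ s i j) (γ : ℝ) (h0 : 0 ≤ γ) (h1 : γ ≤ 1)
    (M : Matrix (Fin n × Fin 2) (Fin n × Fin 2) ℝ)
    (hM : ∀ (i j : Fin n) (p q : Fin 2), M (i, p) (j, q) =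
      if p = q then (s i j - γ * c i j) / 2 else (s i j + γ * c i j) / 2) :
    (∀ u v, 0 ≤ M u v) ∧
      (M.map Complex.ofReal).charpoly.roots =
        ((Matrix.of s).map Complex.ofReal).charpoly.roots +
          Multiset.map (fun z => -(γ : ℂ) * z)
            ((Matrix.of c).map Complex.ofReal).charpoly.roots := by
  constructor
  · rintro ⟨i, p⟩ ⟨j, q⟩
    rw [hM]
    have hc1 := (abs_le.mp (h i j)).1
    have hc2 := (abs_le.mp (h i j)).2
    have hs : 0 ≤ s i j := le_trans (abs_nonneg _) (h i j)
    split_ifs <;>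
      nlinarith [mul_nonneg h0 (sub_nonneg.mpr hc2), mul_nonneg h0 (sub_nonneg.mpr (neg_le.mp hc1)),
        mul_nonneg (sub_nonneg.mpr h1) hs]
  · set e : Fin n × Fin 2 ≃ (Fin n ⊕ Fin n) :=
      { toFun := fun x => if x.2 = 0 then Sum.inl x.1 else Sum.inr x.1
        invFun := Sum.elim (fun i => (i, 0)) (fun i => (i, 1))
        left_inv := by rintro ⟨i, p⟩; fin_cases p <;> simp
        right_inv := by rintro (i | i) <;> simp } with he
    set A : Matrix (Fin n) (Fin n) ℂ :=
      Matrix.of fun i j => (((s i j - γ * c i j) / 2 : ℝ) : ℂ) with hA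
    set B : Matrix (Fin n) (Fin n) ℂ :=
      Matrix.of fun i j => (((s i j + γ * c i j) / 2 : ℝ) : ℂ) with hB
    have hre : reindex e e (M.map Complex.ofReal) = fromBlocks A B B A := by
      ext u v
      cases u <;> cases v <;>
        simp [he, hA, hB, Matrix.reindex_apply, Matrix.submatrix_apply, Matrix.map_apply, hM,
          Matrix.fromBlocks]
    have h2 : (M.map Complex.ofReal).charpoly = (A + B).charpoly * (A - B).charpoly := by
      rw [← Matrix.charpoly_reindex e, hre, my_charpoly_fromBlocks_comm]
    have hABs : A + B = (Matrix.of s).map Complex.ofReal := by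
      ext i j
      simp [hA, hB, Matrix.add_apply, Matrix.map_apply]
      push_cast
      ring
    have hABc : A - B = (-(γ : ℂ)) • ((Matrix.of c).map Complex.ofReal) := by
      ext i j
      simp [hA, hB, Matrix.sub_apply, Matrix.map_apply, Matrix.smul_apply]
      push_cast
      ring
    rw [h2, hABs, hABc,
      Polynomial.roots_mul (mul_ne_zero (Matrix.charpoly_monic _).ne_zero
        (Matrix.charpoly_monic _).ne_zero),
      my_roots_charpoly_smul]
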